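/- Let E be a real normed vector space, λ : E → (E →L[ℝ] ℝ) a differentiable 1-form, Z : E → E a differentiable vector field with ι_Z dλ = λ, and h : E × ℝ → ℝ a differentiable function such that for every (p,θ) ∈ E × ℝ the partial Fréchet derivative of h in the first variable satisfies D_p h(p,θ)(Z p) = h(p,θ). Fix t ∈ ℝ and define the 1-form Λ_t on Ē := E × ℝ × ℝ (with points written (p,s,θ)) by Λ_t(p,s,θ)(v,c,d) := λ_p(v) + (2s + t·h(p,θ))·d. Then Λ_t is differentiable and its exterior derivative satisfies, for every (p,s,θ) and every (v,c,d) ∈ E × ℝ × ℝ: dΛ_t at (p,s,θ) evaluated on the pair ((Z p, s, 0), (v,c,d)) equals Λ_t(p,s,θ)(v,c,d). (That is, ι_{Z^𝒟} dΛ_t = Λ_t where Z^𝒟 = Z + s∂_s: the vector field Z^𝒟 is a Liouville vector field for each of the 1-forms λ + (2s + t·h_θ) dθ.) -/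

import Mathlib

set_option maxHeartbeats 1000000 in
/-- If `ι_Z dλ = λ` on `E` and `h : E × ℝ → ℝ` satisfies `D_p h(p,θ)(Z p) = h(p,θ)`,
then for each `t`, the 1-form `Λ_t(p,s,θ)(v,c,d) = λ_p(v) + (2s + t·h(p,θ))·d` on `E × ℝ × ℝ` is
differentiable and the vector field `Z^𝒟 = (Z p, s, 0)` is Liouville for it:
`ι_{Z^𝒟} dΛ_t = Λ_t`. -/
theorem stmt_9 {E : Type*} [NormedAddCommGroup E] [NormedSpace ℝ E]
    (lam : E → (E →L[ℝ] ℝ)) (Z : E → E)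
    (hlam : Differentiable ℝ lam) (hZ : Differentiable ℝ Z)
    (hLiouville : ∀ p v : E,
      (fderiv ℝ lam p (Z p)) v - (fderiv ℝ lam p v) (Z p) = lam p v)
    (h : E × ℝ → ℝ) (hh : Differentiable ℝ h)
    (hhZ : ∀ (p : E) (θ : ℝ), fderiv ℝ (fun q : E => h (q, θ)) p (Z p) = h (p, θ))
    (t : ℝ)
    (Lam : E × ℝ × ℝ → ((E × ℝ × ℝ) →L[ℝ] ℝ))
    (hLam : ∀ (p : E) (s θ : ℝ) (v : E) (c d : ℝ),
      Lam (p, s, θ) (v, c, d) = lam p v + (2 * s + t * h (p, θ)) * d) :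
    Differentiable ℝ Lam ∧
    ∀ (p : E) (s θ : ℝ) (v : E) (c d : ℝ),
      (fderiv ℝ Lam (p, s, θ) (Z p, s, 0)) (v, c, d)
        - (fderiv ℝ Lam (p, s, θ) (v, c, d)) (Z p, s, 0)
      = Lam (p, s, θ) (v, c, d) := by
  classical
  set fst1 : (E × ℝ × ℝ) →L[ℝ] E := ContinuousLinearMap.fst ℝ E (ℝ × ℝ) with hfst1
  set S : (E × ℝ × ℝ) →L[ℝ] ℝ :=
    (ContinuousLinearMap.fst ℝ ℝ ℝ).comp (ContinuousLinearMap.snd ℝ E (ℝ × ℝ)) with hS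
  set K : (E × ℝ × ℝ) →L[ℝ] ℝ :=
    (ContinuousLinearMap.snd ℝ ℝ ℝ).comp (ContinuousLinearMap.snd ℝ E (ℝ × ℝ)) with hK
  set π : (E × ℝ × ℝ) →L[ℝ] (E × ℝ) := fst1.prod K with hπ
  set Φ : (E →L[ℝ] ℝ) →L[ℝ] ((E × ℝ × ℝ) →L[ℝ] ℝ) :=
    (ContinuousLinearMap.compL ℝ (E × ℝ × ℝ) E ℝ).flip fst1 with hΦ
  -- partial derivative fact
  have key : ∀ (p : E) (θ : ℝ), fderiv ℝ h (p, θ) (Z p, 0) = h (p, θ) := by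
    intro p θ
    have h1 : HasFDerivAt (fun q : E => h (q, θ))
        ((fderiv ℝ h (p, θ)).comp ((ContinuousLinearMap.id ℝ E).prod 0)) p :=
      (hh (p, θ)).hasFDerivAt.comp p (HasFDerivAt.prodMk (hasFDerivAt_id p) (hasFDerivAt_const θ p))
    rw [← hhZ p θ, h1.fderiv]
    simp
  -- Lam equals an explicit formula
  have hEq : Lam = fun x : E × ℝ × ℝ =>
      Φ (lam x.1) + (2 * S x + t * h (π x)) • K := by
    funext x
    obtain ⟨p, s, θ⟩ := x
    refine ContinuousLinearMap.ext fun u => ?_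
    obtain ⟨v, c, d⟩ := u
    simp [hLam, hΦ, hS, hπ, hK, hfst1, mul_comm]
  -- derivative of the explicit formula
  have hD : ∀ x : E × ℝ × ℝ,
      HasFDerivAt Lam
        (Φ.comp ((fderiv ℝ lam x.1).comp fst1)
          + ((2 : ℝ) • S + t • ((fderiv ℝ h (π x)).comp π)).smulRight K) x := by
    intro x
    rw [hEq]
    have h1 : HasFDerivAt (fun y : E × ℝ × ℝ => Φ (lam y.1))
        (Φ.comp ((fderiv ℝ lam x.1).comp fst1)) x := by
      have := (hlam x.1).hasFDerivAt.comp x (hasFDerivAt_fst (p := x))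
      exact (Φ.hasFDerivAt.comp x this).congr_fderiv (by rw [hfst1])
    have h2 : HasFDerivAt (fun y : E × ℝ × ℝ => 2 * S y + t * h (π y))
        ((2 : ℝ) • S + t • ((fderiv ℝ h (π x)).comp π)) x := by
      have hs : HasFDerivAt (fun y : E × ℝ × ℝ => 2 * S y) ((2 : ℝ) • S) x :=
        S.hasFDerivAt.const_mul 2
      have hth : HasFDerivAt (fun y : E × ℝ × ℝ => t * h (π y))
          (t • ((fderiv ℝ h (π x)).comp π)) x :=
        ((hh (π x)).hasFDerivAt.comp x π.hasFDerivAt).const_mul t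
      exact hs.add hth
    exact h1.add (h2.smul_const K)
  refine ⟨fun x => (hD x).differentiableAt, ?_⟩
  intro p s θ v c d
  rw [(hD (p, s, θ)).fderiv, hLam]
  have hkey := key p θ
  have hL := hLiouville p v
  simp only [ContinuousLinearMap.add_apply, ContinuousLinearMap.coe_comp', Function.comp_apply,
    ContinuousLinearMap.smulRight_apply, ContinuousLinearMap.smul_apply, hΦ,
    ContinuousLinearMap.flip_apply, ContinuousLinearMap.compL_apply, hS, hK, hπ, hfst1,
    ContinuousLinearMap.coe_fst', ContinuousLinearMap.coe_snd', ContinuousLinearMap.prod_apply,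
    smul_eq_mul]
  rw [hkey]
  ring_nf
  linarith [hL]
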